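/- Let H be an n×m matrix, D a positive diagonal n×n matrix, P an n×n permutation matrix, Q an m×m permutation matrix, X an n×d feature matrix, and Θ a d×d' matrix. Define Y = Σ_{k=0}^{K} γ_k Ã^k X Θ with Ã = (1/(p+1)) D^{-1/2} H Hᵀ D^{-1/2}, and Y' the same expression computed from H' = PHQᵀ, D' = PDPᵀ, X' = PX. Then Y' = PY. -/
import Mathlib

open Matrix

lemma permMatrix_mul_transpose {k : ℕ} (θ : Equiv.Perm (Fin k)) :
    (θ.permMatrix ℝ) * (θ.permMatrix ℝ)ᵀ = 1 := by
  rw [Equiv.Perm.permMatrix, ← PEquiv.toMatrix_symm, ← Equiv.toPEquiv_symm,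
    ← PEquiv.toMatrix_trans, ← Equiv.toPEquiv_trans]
  simp

lemma permMatrix_transpose_mul {k : ℕ} (θ : Equiv.Perm (Fin k)) :
    (θ.permMatrix ℝ)ᵀ * (θ.permMatrix ℝ) = 1 := by
  rw [Equiv.Perm.permMatrix, ← PEquiv.toMatrix_symm, ← Equiv.toPEquiv_symm,
    ← PEquiv.toMatrix_trans, ← Equiv.toPEquiv_trans]
  simp

/-- Node-permutation equivariance of the HiGCN convolution layer:
Y' = P Y where Y = Σ_k γ_k Ã^k X Θ. -/
theorem higcn_layer_perm_equivariant (n m p d' e K : ℕ)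
    (H : Matrix (Fin n) (Fin m) ℝ) (dg : Fin n → ℝ) (hd : ∀ i, 0 < dg i)
    (σ : Equiv.Perm (Fin n)) (τ : Equiv.Perm (Fin m))
    (X : Matrix (Fin n) (Fin d') ℝ) (Θ : Matrix (Fin d') (Fin e) ℝ)
    (γ : ℕ → ℝ) :
    let D : Matrix (Fin n) (Fin n) ℝ := Matrix.diagonal dg
    let Dhi : Matrix (Fin n) (Fin n) ℝ :=
      Matrix.diagonal fun i => (Real.sqrt (dg i))⁻¹
    let A : Matrix (Fin n) (Fin n) ℝ := ((p : ℝ) + 1)⁻¹ • (Dhi * H * Hᵀ * Dhi)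
    let P : Matrix (Fin n) (Fin n) ℝ := σ.permMatrix ℝ
    let Q : Matrix (Fin m) (Fin m) ℝ := τ.permMatrix ℝ
    let H' : Matrix (Fin n) (Fin m) ℝ := P * H * Qᵀ
    let D' : Matrix (Fin n) (Fin n) ℝ := P * D * Pᵀ
    let Dhi' : Matrix (Fin n) (Fin n) ℝ :=
      Matrix.diagonal fun i => (Real.sqrt (D' i i))⁻¹
    let A' : Matrix (Fin n) (Fin n) ℝ :=
      ((p : ℝ) + 1)⁻¹ • (Dhi' * H' * H'ᵀ * Dhi')
    let X' : Matrix (Fin n) (Fin d') ℝ := P * X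
    let Y : Matrix (Fin n) (Fin e) ℝ :=
      ∑ k ∈ Finset.range (K + 1), γ k • (A ^ k * X * Θ)
    let Y' : Matrix (Fin n) (Fin e) ℝ :=
      ∑ k ∈ Finset.range (K + 1), γ k • (A' ^ k * X' * Θ)
    Y' = P * Y := by
  intro D Dhi A P Q H' D' Dhi' A' X' Y Y'
  have hPtP : Pᵀ * P = 1 := permMatrix_transpose_mul σ
  have hPPt : P * Pᵀ = 1 := permMatrix_mul_transpose σ
  have hQtQ : Qᵀ * Q = 1 := permMatrix_transpose_mul τ
  have hPT : Pᵀ = (σ⁻¹).permMatrix ℝ := by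
    rw [Equiv.Perm.permMatrix, ← PEquiv.toMatrix_symm, ← Equiv.toPEquiv_symm]
    rfl
  -- D' diagonal entries
  have hD' : ∀ i, D' i i = dg (σ i) := by
    intro i
    simp [D', hPT, D, P, Equiv.Perm.permMatrix, PEquiv.toMatrix_toPEquiv_mul,
      PEquiv.mul_toMatrix_toPEquiv, Equiv.Perm.inv_def]
  have hDhi' : Dhi' = P * Dhi * Pᵀ := by
    rw [hPT]
    simp only [P, Equiv.Perm.permMatrix, PEquiv.toMatrix_toPEquiv_mul,
      PEquiv.mul_toMatrix_toPEquiv]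
    ext i j
    simp only [Dhi', Dhi, hD', Matrix.submatrix_apply, Matrix.diagonal_apply, id,
      Equiv.Perm.inv_def, Equiv.symm_symm]
    by_cases h : i = j
    · subst h; simp
    · simp [h, fun hc => h (σ.injective hc)]
  have hA' : A' = P * A * Pᵀ := by
    have key : Dhi' * H' * H'ᵀ * Dhi' = P * (Dhi * H * Hᵀ * Dhi) * Pᵀ := by
      simp only [hDhi', H', Matrix.transpose_mul, Matrix.transpose_transpose]
      calc P * Dhi * Pᵀ * (P * H * Qᵀ) * (Q * (Hᵀ * Pᵀ)) * (P * Dhi * Pᵀ)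
          = P * (Dhi * ((Pᵀ * P) * (H * ((Qᵀ * Q) * (Hᵀ * ((Pᵀ * P) * Dhi)))))) * Pᵀ := by
            simp only [Matrix.mul_assoc]
        _ = P * (Dhi * H * Hᵀ * Dhi) * Pᵀ := by
            rw [hPtP, hQtQ]
            simp only [Matrix.one_mul, Matrix.mul_assoc]
    rw [show A' = ((p : ℝ) + 1)⁻¹ • (Dhi' * H' * H'ᵀ * Dhi') from rfl, key]
    simp [A, Matrix.mul_smul, Matrix.smul_mul]
  have hpow : ∀ k, A' ^ k = P * A ^ k * Pᵀ := by
    intro k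
    induction k with
    | zero => simpa using hPPt.symm
    | succ k ih =>
      rw [pow_succ, pow_succ, ih, hA']
      calc P * A ^ k * Pᵀ * (P * A * Pᵀ) = P * (A ^ k * ((Pᵀ * P) * A)) * Pᵀ := by
            simp only [Matrix.mul_assoc]
        _ = P * (A ^ k * A) * Pᵀ := by rw [hPtP]; simp only [Matrix.one_mul, Matrix.mul_assoc]
  calc Y' = ∑ k ∈ Finset.range (K + 1), γ k • (P * (A ^ k * X * Θ)) := by
        apply Finset.sum_congr rfl
        intro k _
        rw [hpow k]
        congr 1
        calc P * A ^ k * Pᵀ * (P * X) * Θ = P * (A ^ k * ((Pᵀ * P) * (X * Θ))) := by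
              simp only [X', Matrix.mul_assoc]
          _ = P * (A ^ k * X * Θ) := by rw [hPtP]; simp only [Matrix.one_mul, Matrix.mul_assoc]
    _ = P * Y := by
        rw [show Y = ∑ k ∈ Finset.range (K + 1), γ k • (A ^ k * X * Θ) from rfl, Matrix.mul_sum]
        exact Finset.sum_congr rfl fun k _ => (Matrix.mul_smul ..).symm
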